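/- arXiv:2106.07281 — 6 statements merged into one kernel-verified Lean document; each statement's English description precedes it below -/
import Mathlib

section
/- Let (Ω,(F_n)_{n∈ℕ},P) be a filtered probability space, let F, G : Ω → [0,∞] be measurable, and let K ∈ [0,∞). Suppose that for every weight w on Ω one has E(F · w) ≤ K · E(G · w*). Then for every r ∈ (1,∞), ‖F‖_{L^r(Ω)} ≤ K r ‖G‖_{L^r(Ω)}. (This follows from Hölder's inequality, Doob's maximal inequality ‖w*‖_{L^{r'}} ≤ r ‖w‖_{L^{r'}} with r' = r/(r−1), and duality of L^r and L^{r'}.) -/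
open MeasureTheory ENNReal Set Finset

lemma aux_cancel {x a : ℝ≥0∞} {u v : ℝ} (hu : 0 < u) (huv : u + v = 1)
    (hx : x ≠ ∞) (h : x ≤ a * x ^ v) : x ^ u ≤ a := by
  rcases eq_or_ne x 0 with rfl | hx0
  · rw [ENNReal.zero_rpow_of_pos hu]; exact zero_le
  · have hxid : x ^ u * x ^ v = x := by
      rw [← ENNReal.rpow_add u v hx0 hx, huv, ENNReal.rpow_one]
    have hv0 : x ^ v ≠ 0 := by
      simp [ENNReal.rpow_eq_zero_iff, hx0, hx]
    have hvt : x ^ v ≠ ∞ := by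
      simp [ENNReal.rpow_eq_top_iff, hx0, hx]
    have h' : x ^ u * x ^ v ≤ a * x ^ v := hxid.symm ▸ h
    exact (ENNReal.mul_le_mul_iff_left hv0 hvt).mp h'

/-- value of the elementary integral `∫_{(0,a]} t^(q-2) dt`. -/
lemma aux_elem_integral {q : ℝ} (hq : 1 < q) {a : ℝ} (ha : 0 ≤ a) :
    ∫⁻ t in Ioc (0:ℝ) a, ENNReal.ofReal (t ^ (q-2)) ∂volume
      = ENNReal.ofReal (1/(q-1)) * ENNReal.ofReal a ^ (q-1) := by
  rcases eq_or_lt_of_le ha with rfl | ha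
  · simp [ENNReal.zero_rpow_of_pos (by linarith : (0:ℝ) < q - 1)]
  · have hint : IntegrableOn (fun t : ℝ => t ^ (q-2)) (Ioc 0 a) volume :=
      (intervalIntegral.intervalIntegrable_rpow' (by linarith : (-1:ℝ) < q-2)).1
    have hnn : ∀ᵐ t ∂(volume.restrict (Ioc (0:ℝ) a)), 0 ≤ t ^ (q-2) := by
      filter_upwards [self_mem_ae_restrict measurableSet_Ioc] with t ht
      exact Real.rpow_nonneg ht.1.le _
    rw [← ofReal_integral_eq_lintegral_ofReal hint hnn]
    have : ∫ t in Ioc (0:ℝ) a, t ^ (q-2) = a ^ (q-1) / (q-1) := by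
      rw [← intervalIntegral.integral_of_le ha.le,
        integral_rpow (Or.inl (by linarith : (-1:ℝ) < q-2))]
      rw [Real.zero_rpow (by linarith : q - 2 + 1 ≠ 0)]
      norm_num
      ring_nf
    rw [this, div_eq_mul_one_div, mul_comm,
      ENNReal.ofReal_mul (one_div_nonneg.mpr (by linarith)),
      ENNReal.ofReal_rpow_of_nonneg ha.le (by linarith)]

/-- Doob's Lᵖ inequality combined with Hölder, for a bounded nonnegative weight. -/
lemma doob_holder {Ω : Type*} {m0 : MeasurableSpace Ω} {μ : Measure Ω} [IsProbabilityMeasure μ]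
    (ℱ : Filtration ℕ m0) (G : Ω → ℝ≥0∞) (hG : Measurable G)
    (w : Ω → ℝ) (hw : Measurable w) (hw0 : ∀ ω, 0 ≤ w ω)
    {C : ℝ} (hC : 0 ≤ C) (hwC : ∀ ω, w ω ≤ C)
    {r q : ℝ} (hq : r.HolderConjugate q) :
    ∫⁻ ω, G ω * (⨆ n, ENNReal.ofReal ((μ[w | ℱ n]) ω)) ∂μ
      ≤ (∫⁻ ω, G ω ^ r ∂μ) ^ (1/r) *
          (ENNReal.ofReal r * (∫⁻ ω, ENNReal.ofReal (w ω) ^ q ∂μ) ^ (1/q)) := by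
  have hr1 : 1 < r := hq.lt
  have hq1 : 1 < q := hq.symm.lt
  have hw_int : Integrable w μ := by
    refine (integrable_const C).mono' hw.aestronglyMeasurable (ae_of_all _ fun ω => ?_)
    rw [Real.norm_of_nonneg (hw0 ω)]; exact hwC ω
  set f : ℕ → Ω → ℝ := fun n => μ[w | ℱ n] with hf
  have hmart : Martingale f ℱ μ := martingale_condExp w ℱ μ
  set fp : ℕ → Ω → ℝ := f ⊔ 0 with hfpdef
  have hsub : Submartingale fp ℱ μ :=
    hmart.submartingale.sup (martingale_zero _ _ _).submartingale
  have hfp : ∀ k ω, fp k ω = max (f k ω) 0 := fun k ω => rfl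
  set M : ℕ → Ω → ℝ := fun n ω =>
    (Finset.range (n+1)).sup' nonempty_range_add_one fun k => fp k ω with hM
  -- measurability of M n with respect to ℱ n
  have hfmeas : ∀ k, Measurable[ℱ k] (fp k) := by
    intro k
    exact (stronglyMeasurable_condExp.measurable.max (@measurable_const _ _ _ (ℱ k) 0))
  have hMmeas : ∀ n, Measurable[ℱ n] (M n) := by
    intro n
    exact @Finset.measurable_range_sup'' ℝ _ Ω (ℱ n) _ _ _ _ fun k hk =>
      ((hfmeas k).mono (ℱ.mono hk) le_rfl)
  have hMm0 : ∀ n, Measurable (M n) := fun n => (hMmeas n).mono (ℱ.le n) le_rfl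
  have hMnn : ∀ n ω, 0 ≤ M n ω := by
    intro n ω
    have h0 : (0:ℝ) ≤ fp 0 ω := le_max_right _ _
    exact h0.trans (Finset.le_sup' (fun k => fp k ω) (Finset.mem_range.mpr n.succ_pos))
  -- the weak-type (1,1) maximal inequality, in `lintegral` form
  have hweak : ∀ (n : ℕ) {t : ℝ}, 0 < t →
      ENNReal.ofReal t * μ {ω | t ≤ M n ω}
        ≤ ∫⁻ ω in {ω | t ≤ M n ω}, ENNReal.ofReal (w ω) ∂μ := by
    intro n t ht
    have hSmeas : MeasurableSet[ℱ n] {ω | t ≤ M n ω} :=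
      (hMmeas n) measurableSet_Ici
    have key := maximal_ineq hsub le_sup_right (ε := t.toNNReal) n
    rw [Real.coe_toNNReal t ht.le] at key
    have hfpf : (fun ω => fp n ω) =ᵐ[μ] f n := by
      filter_upwards [condExp_nonneg (ae_of_all _ hw0)] with ω hω
      exact max_eq_left hω
    have hint : ∫ ω in {ω | t ≤ M n ω}, fp n ω ∂μ = ∫ ω in {ω | t ≤ M n ω}, w ω ∂μ := by
      rw [integral_congr_ae (ae_restrict_of_ae hfpf)]
      exact setIntegral_condExp (ℱ.le n) hw_int hSmeas
    rw [hint, ofReal_integral_eq_lintegral_ofReal hw_int.integrableOn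
      (ae_restrict_of_ae (ae_of_all _ hw0))] at key
    exact key
  set W := (∫⁻ ω, ENNReal.ofReal (w ω) ^ q ∂μ) ^ (1/q) with hW
  -- a.e. boundedness of the maximal functions
  have hMC : ∀ n, ∀ᵐ ω ∂μ, M n ω ≤ C := by
    intro n
    have hk : ∀ k : ℕ, ∀ᵐ ω ∂μ, f k ω ≤ C := by
      intro k
      have h1 : f k ≤ᵐ[μ] μ[(fun _ => C) | ℱ k] :=
        condExp_mono hw_int (integrable_const C) (ae_of_all _ hwC)
      rw [condExp_const (ℱ.le k)] at h1
      exact h1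
    filter_upwards [ae_all_iff.mpr hk] with ω hω
    exact Finset.sup'_le _ _ fun k _ => max_le (hω k) hC
  have hIfin : ∀ n, ∫⁻ ω, ENNReal.ofReal (M n ω) ^ q ∂μ ≠ ∞ := by
    intro n
    have hb : ∫⁻ ω, ENNReal.ofReal (M n ω) ^ q ∂μ
        ≤ ∫⁻ _, ENNReal.ofReal C ^ q ∂μ := by
      refine lintegral_mono_ae ?_
      filter_upwards [hMC n] with ω hω
      exact ENNReal.rpow_le_rpow (ENNReal.ofReal_le_ofReal hω) (by linarith)
    refine ne_of_lt (lt_of_le_of_lt hb ?_)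
    rw [lintegral_const]
    exact ENNReal.mul_lt_top
      (ENNReal.rpow_ne_top_of_nonneg (by linarith) ENNReal.ofReal_ne_top).lt_top
      (measure_lt_top μ _)
  -- Doob's Lᵖ inequality for the maximal functions
  have hLp : ∀ n, (∫⁻ ω, ENNReal.ofReal (M n ω) ^ q ∂μ) ^ (1/q)
      ≤ ENNReal.ofReal r * W := by
    intro n
    set I := ∫⁻ ω, ENNReal.ofReal (M n ω) ^ q ∂μ with hI
    have hlayer : I = ENNReal.ofReal q *
        ∫⁻ t in Ioi (0:ℝ), μ {a | t ≤ M n a} * ENNReal.ofReal (t ^ (q-1)) ∂volume := by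
      rw [hI, ← lintegral_rpow_eq_lintegral_meas_le_mul μ (ae_of_all _ (hMnn n))
        (hMm0 n).aemeasurable (by linarith : (0:ℝ) < q)]
      exact lintegral_congr fun ω => ENNReal.ofReal_rpow_of_nonneg (hMnn n ω) (by linarith)
    have hstep : I ≤ ENNReal.ofReal q *
        ∫⁻ t in Ioi (0:ℝ), ENNReal.ofReal (t ^ (q-2)) *
          ∫⁻ ω in {a | t ≤ M n a}, ENNReal.ofReal (w ω) ∂μ ∂volume := by
      rw [hlayer]
      refine mul_le_mul_right (lintegral_mono_ae ?_) _
      filter_upwards [self_mem_ae_restrict measurableSet_Ioi] with t ht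
      have ht' : (0:ℝ) < t := ht
      have h1 : ENNReal.ofReal (t ^ (q-1)) = ENNReal.ofReal (t ^ (q-2)) * ENNReal.ofReal t := by
        rw [← ENNReal.ofReal_mul (Real.rpow_nonneg ht'.le _)]
        congr 1
        rw [show q - 1 = (q-2) + 1 by ring, Real.rpow_add ht', Real.rpow_one]
      calc μ {a | t ≤ M n a} * ENNReal.ofReal (t ^ (q-1))
          = ENNReal.ofReal (t ^ (q-2)) * (ENNReal.ofReal t * μ {a | t ≤ M n a}) := by
            rw [h1]; ring
        _ ≤ _ := mul_le_mul_right (hweak n ht') _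
    -- Fubini
    set φ : ℝ × Ω → ℝ≥0∞ := Set.indicator {p : ℝ × Ω | p.1 ≤ M n p.2}
        (fun p => ENNReal.ofReal (p.1 ^ (q-2)) * ENNReal.ofReal (w p.2)) with hφ
    have hφmeas : Measurable φ := by
      refine Measurable.indicator ?_ ?_
      · exact ((measurable_fst.pow_const _).ennreal_ofReal).mul
          ((hw.comp measurable_snd).ennreal_ofReal)
      · exact measurableSet_le measurable_fst ((hMm0 n).comp measurable_snd)
    have hswap : ∫⁻ t in Ioi (0:ℝ), ENNReal.ofReal (t ^ (q-2)) *
          ∫⁻ ω in {a | t ≤ M n a}, ENNReal.ofReal (w ω) ∂μ ∂volume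
        = ∫⁻ ω, ENNReal.ofReal (w ω) *
            (ENNReal.ofReal (1/(q-1)) * ENNReal.ofReal (M n ω) ^ (q-1)) ∂μ := by
      have key := lintegral_lintegral_swap (f := fun (t : ℝ) (ω : Ω) => φ (t, ω))
        (μ := volume.restrict (Ioi (0:ℝ))) (ν := μ) hφmeas.aemeasurable
      calc ∫⁻ t in Ioi (0:ℝ), ENNReal.ofReal (t ^ (q-2)) *
            ∫⁻ ω in {a | t ≤ M n a}, ENNReal.ofReal (w ω) ∂μ ∂volume
          = ∫⁻ t in Ioi (0:ℝ), ∫⁻ ω, φ (t, ω) ∂μ ∂volume := by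
            refine lintegral_congr fun t => ?_
            have hft : ∀ ω, φ (t, ω) = Set.indicator {a | t ≤ M n a}
                (fun ω => ENNReal.ofReal (t ^ (q-2)) * ENNReal.ofReal (w ω)) ω := by
              intro ω
              by_cases hc : t ≤ M n ω <;> simp [hφ, Set.indicator, hc]
            have hSm : MeasurableSet {a | t ≤ M n a} := (hMm0 n) measurableSet_Ici
            simp only [hft]
            rw [lintegral_indicator hSm, lintegral_const_mul _ hw.ennreal_ofReal]
        _ = ∫⁻ ω, ∫⁻ t in Ioi (0:ℝ), φ (t, ω) ∂volume ∂μ := key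
        _ = ∫⁻ ω, ENNReal.ofReal (w ω) *
            (ENNReal.ofReal (1/(q-1)) * ENNReal.ofReal (M n ω) ^ (q-1)) ∂μ := by
            refine lintegral_congr fun ω => ?_
            have hfω : ∀ t, φ (t, ω) = Set.indicator (Iic (M n ω))
                (fun t => ENNReal.ofReal (t ^ (q-2)) * ENNReal.ofReal (w ω)) t := by
              intro t
              by_cases hc : t ≤ M n ω <;> simp [hφ, Set.indicator, hc]
            simp only [hfω]
            rw [lintegral_indicator measurableSet_Iic,
              Measure.restrict_restrict measurableSet_Iic, Set.inter_comm,
              Set.Ioi_inter_Iic, lintegral_mul_const' _ _ ENNReal.ofReal_ne_top,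
              aux_elem_integral hq1 (hMnn n ω)]
            ring
    have hIq : I ≤ ENNReal.ofReal r *
        ∫⁻ ω, ENNReal.ofReal (w ω) * ENNReal.ofReal (M n ω) ^ (q-1) ∂μ := by
      refine hstep.trans ?_
      rw [hswap]
      have : ∫⁻ ω, ENNReal.ofReal (w ω) *
            (ENNReal.ofReal (1/(q-1)) * ENNReal.ofReal (M n ω) ^ (q-1)) ∂μ
          = ENNReal.ofReal (1/(q-1)) *
            ∫⁻ ω, ENNReal.ofReal (w ω) * ENNReal.ofReal (M n ω) ^ (q-1) ∂μ := by
        rw [← lintegral_const_mul _ (f := fun ω =>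
            ENNReal.ofReal (w ω) * ENNReal.ofReal (M n ω) ^ (q-1)) (hw.ennreal_ofReal.mul
          ((hMm0 n).ennreal_ofReal.pow_const _))]
        exact lintegral_congr fun ω => by ring
      rw [this, ← mul_assoc, ← ENNReal.ofReal_mul (by linarith : (0:ℝ) ≤ q)]
      have hqr : q * (1/(q-1)) = r := by
        rw [hq.symm.conjugate_eq]; ring
      rw [hqr]
    have hhold : ∫⁻ ω, ENNReal.ofReal (w ω) * ENNReal.ofReal (M n ω) ^ (q-1) ∂μ
        ≤ W * I ^ (1/r) := by
      have h2 := ENNReal.lintegral_mul_le_Lp_mul_Lq μ hq.symm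
        hw.ennreal_ofReal.aemeasurable
        (((hMm0 n).ennreal_ofReal.pow_const (q-1)).aemeasurable)
      have h3 : ∫⁻ ω, (ENNReal.ofReal (M n ω) ^ (q-1)) ^ r ∂μ = I := by
        rw [hI]
        refine lintegral_congr fun ω => ?_
        rw [← ENNReal.rpow_mul, hq.symm.sub_one_mul_conj]
      rw [h3] at h2
      exact h2
    have hfin : I ≠ ∞ := hIfin n
    refine aux_cancel (u := 1/q) (v := 1/r) (by positivity) ?_ hfin ?_
    · rw [one_div, one_div, add_comm]
      exact hq.inv_add_inv_eq_one
    · calc I ≤ ENNReal.ofReal r * (W * I ^ (1/r)) := hIq.trans (mul_le_mul_right hhold _)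
        _ = (ENNReal.ofReal r * W) * I ^ (1/r) := by ring
  -- monotone convergence and Hölder for `G`
  have hMmono : ∀ ⦃a b : ℕ⦄, a ≤ b → ∀ ω, M a ω ≤ M b ω := by
    intro a b hab ω
    refine Finset.sup'_le _ _ fun k hk => Finset.le_sup' (fun j => fp j ω) ?_
    rw [Finset.mem_range] at hk ⊢
    omega
  calc ∫⁻ ω, G ω * (⨆ n, ENNReal.ofReal (f n ω)) ∂μ
      ≤ ∫⁻ ω, G ω * (⨆ n, ENNReal.ofReal (M n ω)) ∂μ := by
        refine lintegral_mono fun ω => mul_le_mul_right (iSup_le fun k => ?_) _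
        refine le_iSup_of_le k (ENNReal.ofReal_le_ofReal ?_)
        exact (le_max_left _ _).trans
          (Finset.le_sup' (fun j => fp j ω) (Finset.mem_range.mpr k.lt_succ_self))
    _ = ⨆ n, ∫⁻ ω, G ω * ENNReal.ofReal (M n ω) ∂μ := by
        rw [← lintegral_iSup (f := fun n ω => G ω * ENNReal.ofReal (M n ω))
          (fun n => hG.mul (hMm0 n).ennreal_ofReal)
          (fun a b hab ω => mul_le_mul_right
            (ENNReal.ofReal_le_ofReal (hMmono hab ω)) _)]
        exact lintegral_congr fun ω => ENNReal.mul_iSup (G ω) fun n => ENNReal.ofReal (M n ω)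
    _ ≤ (∫⁻ ω, G ω ^ r ∂μ) ^ (1/r) * (ENNReal.ofReal r * W) := by
        refine iSup_le fun n => ?_
        calc ∫⁻ ω, G ω * ENNReal.ofReal (M n ω) ∂μ
            ≤ (∫⁻ ω, G ω ^ r ∂μ) ^ (1/r) *
              (∫⁻ ω, ENNReal.ofReal (M n ω) ^ q ∂μ) ^ (1/q) :=
              ENNReal.lintegral_mul_le_Lp_mul_Lq μ hq hG.aemeasurable
                (hMm0 n).ennreal_ofReal.aemeasurable
          _ ≤ _ := mul_le_mul_right (hLp n) _

/-- **Extrapolation of a two-weight `A₁` bound to `L^r` bounds.**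
If `E(F·w) ≤ K E(G·w*)` for every weight `w`, then `‖F‖_{L^r} ≤ K r ‖G‖_{L^r}` for every
`r ∈ (1,∞)`. -/
theorem extrapolation_A1
    {Ω : Type*} {m0 : MeasurableSpace Ω} {μ : Measure Ω} [IsProbabilityMeasure μ]
    (ℱ : Filtration ℕ m0)
    (F G : Ω → ℝ≥0∞) (hF : Measurable F) (hG : Measurable G)
    (K : ℝ) (hK : 0 ≤ K)
    (h : ∀ w : Ω → ℝ, Measurable w → Integrable w μ → (∀ ω, 0 ≤ w ω) →
      ∫⁻ ω, F ω * ENNReal.ofReal (w ω) ∂μ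
        ≤ ENNReal.ofReal K *
          ∫⁻ ω, G ω * (⨆ n, ENNReal.ofReal ((μ[w | ℱ n]) ω)) ∂μ)
    (r : ℝ) (hr : 1 < r) :
    (∫⁻ ω, F ω ^ r ∂μ) ^ (1/r)
      ≤ ENNReal.ofReal (K * r) * (∫⁻ ω, G ω ^ r ∂μ) ^ (1/r) := by
  have hr0 : (0:ℝ) < r := by linarith
  have hq : r.HolderConjugate (r/(r-1)) := Real.HolderConjugate.conjExponent hr
  set q := r/(r-1) with hqdef
  set A := ENNReal.ofReal (K * r) * (∫⁻ ω, G ω ^ r ∂μ) ^ (1/r) with hA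
  have hsplit : ∀ x : ℝ≥0∞, x ^ r = x * x ^ (r-1) := by
    intro x
    have h1 : x ^ ((1:ℝ) + (r-1)) = x ^ (1:ℝ) * x ^ (r-1) :=
      ENNReal.rpow_add_of_nonneg _ _ zero_le_one (by linarith)
    rw [show (1:ℝ) + (r-1) = r by ring, ENNReal.rpow_one] at h1
    exact h1
  have key : ∀ N : ℕ, (∫⁻ ω, (min (F ω) (N:ℝ≥0∞)) ^ r ∂μ) ^ (1/r) ≤ A := by
    intro N
    set FN : Ω → ℝ≥0∞ := fun ω => min (F ω) (N:ℝ≥0∞) with hFN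
    have hFNmeas : Measurable FN := hF.min measurable_const
    have hFNtop : ∀ ω, FN ω ≠ ∞ := fun ω =>
      ne_top_of_le_ne_top (ENNReal.natCast_ne_top N) (min_le_right _ _)
    set wN : Ω → ℝ := fun ω => (FN ω ^ (r-1)).toReal with hwN
    have hwmeas : Measurable wN := (hFNmeas.pow_const _).ennreal_toReal
    have hw0 : ∀ ω, 0 ≤ wN ω := fun ω => ENNReal.toReal_nonneg
    set C : ℝ := ((N:ℝ≥0∞) ^ (r-1)).toReal with hC
    have hCnn : 0 ≤ C := ENNReal.toReal_nonneg
    have hwC : ∀ ω, wN ω ≤ C := fun ω =>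
      ENNReal.toReal_mono
        (ENNReal.rpow_ne_top_of_nonneg (by linarith) (ENNReal.natCast_ne_top N))
        (ENNReal.rpow_le_rpow (min_le_right _ _) (by linarith))
    have hw_int : Integrable wN μ := by
      refine (integrable_const C).mono' hwmeas.aestronglyMeasurable (ae_of_all _ fun ω => ?_)
      rw [Real.norm_of_nonneg (hw0 ω)]; exact hwC ω
    have hofReal : ∀ ω, ENNReal.ofReal (wN ω) = FN ω ^ (r-1) := fun ω =>
      ENNReal.ofReal_toReal (ENNReal.rpow_ne_top_of_nonneg (by linarith) (hFNtop ω))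
    have hlow : ∫⁻ ω, FN ω ^ r ∂μ ≤ ∫⁻ ω, F ω * ENNReal.ofReal (wN ω) ∂μ := by
      refine lintegral_mono fun ω => ?_
      rw [hofReal ω, hsplit (FN ω)]
      exact mul_le_mul_left (min_le_left _ _) _
    have hmain := h wN hwmeas hw_int hw0
    have hdoob := doob_holder (μ := μ) ℱ G hG wN hwmeas hw0 hCnn hwC hq
    have hwq : ∫⁻ ω, ENNReal.ofReal (wN ω) ^ q ∂μ = ∫⁻ ω, FN ω ^ r ∂μ := by
      refine lintegral_congr fun ω => ?_
      rw [hofReal ω, ← ENNReal.rpow_mul, hq.sub_one_mul_conj]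
    set c := ∫⁻ ω, FN ω ^ r ∂μ with hc
    have hcfin : c ≠ ∞ := by
      have hb : c ≤ ∫⁻ _, (N:ℝ≥0∞) ^ r ∂μ :=
        lintegral_mono fun ω => ENNReal.rpow_le_rpow (min_le_right _ _) hr0.le
      refine ne_of_lt (lt_of_le_of_lt hb ?_)
      rw [lintegral_const]
      exact ENNReal.mul_lt_top
        (ENNReal.rpow_ne_top_of_nonneg hr0.le (ENNReal.natCast_ne_top N)).lt_top
        (measure_lt_top μ _)
    have hchain : c ≤ (ENNReal.ofReal K * ((∫⁻ ω, G ω ^ r ∂μ) ^ (1/r) * ENNReal.ofReal r))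
        * c ^ (1/q) := by
      calc c ≤ ∫⁻ ω, F ω * ENNReal.ofReal (wN ω) ∂μ := hlow
        _ ≤ ENNReal.ofReal K *
            ∫⁻ ω, G ω * (⨆ n, ENNReal.ofReal ((μ[wN | ℱ n]) ω)) ∂μ := hmain
        _ ≤ ENNReal.ofReal K * ((∫⁻ ω, G ω ^ r ∂μ) ^ (1/r) *
            (ENNReal.ofReal r * (∫⁻ ω, ENNReal.ofReal (wN ω) ^ q ∂μ) ^ (1/q))) :=
              mul_le_mul_right hdoob _
        _ = _ := by rw [hwq]; ring
    have hcan : c ^ (1/r)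
        ≤ ENNReal.ofReal K * ((∫⁻ ω, G ω ^ r ∂μ) ^ (1/r) * ENNReal.ofReal r) := by
      refine aux_cancel (one_div_pos.mpr hr0) ?_ hcfin hchain
      rw [one_div, one_div]
      exact hq.inv_add_inv_eq_one
    refine hcan.trans_eq ?_
    rw [hA, ENNReal.ofReal_mul hK]
    ring
  -- monotone convergence in `N`
  have hFsup : ∀ ω, (⨆ N : ℕ, (min (F ω) (N:ℝ≥0∞)) ^ r) = F ω ^ r := by
    intro ω
    refine le_antisymm (iSup_le fun N => ENNReal.rpow_le_rpow (min_le_left _ _) hr0.le) ?_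
    rcases eq_or_ne (F ω) ∞ with htop | hfin
    · rw [htop, ENNReal.top_rpow_of_pos hr0]
      calc (⊤:ℝ≥0∞) = ⨆ N : ℕ, (N:ℝ≥0∞) := ENNReal.iSup_natCast.symm
        _ ≤ ⨆ N : ℕ, (min (⊤:ℝ≥0∞) (N:ℝ≥0∞)) ^ r := by
            refine iSup_mono fun N => ?_
            rw [min_eq_right (le_top : (N:ℝ≥0∞) ≤ ⊤)]
            rcases Nat.eq_zero_or_pos N with rfl | hN
            · simp
            · nth_rewrite 1 [← ENNReal.rpow_one (N:ℝ≥0∞)]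
              exact ENNReal.rpow_le_rpow_of_exponent_le
                (by exact_mod_cast hN) hr.le
    · obtain ⟨N, hN⟩ := ENNReal.exists_nat_gt hfin
      refine le_iSup_of_le N ?_
      rw [min_eq_left hN.le]
  have hmono : Monotone (fun N : ℕ => fun ω => (min (F ω) (N:ℝ≥0∞)) ^ r) := by
    intro a b hab ω
    exact ENNReal.rpow_le_rpow (min_le_min le_rfl (by exact_mod_cast hab)) hr0.le
  have hFeq : ∫⁻ ω, F ω ^ r ∂μ = ⨆ N : ℕ, ∫⁻ ω, (min (F ω) (N:ℝ≥0∞)) ^ r ∂μ := by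
    rw [← lintegral_iSup (fun N => (hF.min measurable_const).pow_const _) hmono]
    exact lintegral_congr fun ω => (hFsup ω).symm
  have hle : ∫⁻ ω, F ω ^ r ∂μ ≤ A ^ r := by
    rw [hFeq]
    refine iSup_le fun N => ?_
    have h2 := ENNReal.rpow_le_rpow (key N) hr0.le
    rwa [← ENNReal.rpow_mul, one_div, inv_mul_cancel₀ (by linarith : r ≠ 0),
      ENNReal.rpow_one] at h2
  calc (∫⁻ ω, F ω ^ r ∂μ) ^ (1/r) ≤ (A ^ r) ^ (1/r) :=
      ENNReal.rpow_le_rpow hle (one_div_pos.mpr hr0).le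
    _ = A := by
      rw [← ENNReal.rpow_mul, mul_one_div, div_self (by linarith : r ≠ 0), ENNReal.rpow_one]
end

section
/- Let X be a Banach space, let (Ω,(F_n)_{n∈ℕ},P) be a filtered probability space, and let (g_n)_{n∈ℕ} be an adapted X-valued process with g_0 = 0. Define the conditional square function sg := (∑_{n≥1} E(‖g_n − g_{n−1}‖² | F_{n−1}))^{1/2} and the square function S_2 g := (∑_{n≥1} ‖g_n − g_{n−1}‖²)^{1/2}. Then for every r ∈ [2,∞), ‖sg‖_{L^r(Ω)} ≤ (r/2)^{1/2} ‖S_2 g‖_{L^r(Ω)}. -/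
open MeasureTheory ENNReal Set

lemma csq_iSup_rpow {p : ℝ} (hp : 0 < p) (s : ℕ → ℝ≥0∞) :
    (⨆ n, s n) ^ p = ⨆ n, (s n) ^ p := by
  refine le_antisymm ?_ (iSup_le fun n => ENNReal.rpow_le_rpow (le_iSup s n) hp.le)
  have h1 : ∀ n, s n ≤ (⨆ m, (s m) ^ p) ^ (1/p) := by
    intro n
    have h2 : s n = ((s n) ^ p) ^ (1/p) := by
      rw [← ENNReal.rpow_mul, mul_one_div, div_self hp.ne', ENNReal.rpow_one]
    rw [h2]
    exact ENNReal.rpow_le_rpow (le_iSup (fun m => (s m) ^ p) n) (by positivity)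
  calc (⨆ n, s n) ^ p ≤ (((⨆ m, (s m) ^ p) ^ (1/p)) : ℝ≥0∞) ^ p :=
        ENNReal.rpow_le_rpow (iSup_le h1) hp.le
    _ = ⨆ m, (s m) ^ p := by
        rw [← ENNReal.rpow_mul, one_div_mul_cancel hp.ne', ENNReal.rpow_one]

lemma csq_real_mvt {p a b : ℝ} (hp : 1 ≤ p) (hb : 0 ≤ b) (hba : b ≤ a) :
    a ^ p - b ^ p ≤ p * (a - b) * a ^ (p - 1) := by
  rcases eq_or_lt_of_le hba with rfl | h
  · simp
  · have ha : 0 ≤ a := hb.trans hba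
    obtain ⟨c, hc, hceq⟩ := exists_hasDerivAt_eq_slope (fun x : ℝ => x ^ p)
        (fun x => p * x ^ (p - 1)) h
        (fun x _ => (Real.continuousAt_rpow_const x p (Or.inr (by linarith))).continuousWithinAt)
        (fun x _ => Real.hasDerivAt_rpow_const (Or.inr hp))
    have hc0 : 0 ≤ c := hb.trans hc.1.le
    have hca : c ≤ a := hc.2.le
    have hab : a - b ≠ 0 := sub_ne_zero.2 (ne_of_gt h)
    have heq : a ^ p - b ^ p = p * c ^ (p - 1) * (a - b) := by
      field_simp at hceq
      linarith [hceq]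
    rw [heq]
    have hcp : c ^ (p - 1) ≤ a ^ (p - 1) := Real.rpow_le_rpow hc0 hca (by linarith)
    have hp0 : 0 ≤ p := by linarith
    nlinarith [sub_nonneg.2 hba, mul_le_mul_of_nonneg_left hcp hp0]

lemma csq_ennreal_mvt {p : ℝ} (hp : 1 ≤ p) {a b : ℝ≥0∞} (hba : b ≤ a) (ha : a ≠ ∞) :
    a ^ p - b ^ p ≤ ENNReal.ofReal p * ((a - b) * a ^ (p - 1)) := by
  have hb : b ≠ ∞ := fun hbt => ha (top_le_iff.mp (hbt ▸ hba))
  have hp0 : (0:ℝ) ≤ p := by linarith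
  set A := a.toReal with hA
  set B := b.toReal with hB
  have hA0 : 0 ≤ A := ENNReal.toReal_nonneg
  have hB0 : 0 ≤ B := ENNReal.toReal_nonneg
  have hBA : B ≤ A := ENNReal.toReal_mono ha hba
  have hae : a = ENNReal.ofReal A := (ENNReal.ofReal_toReal ha).symm
  have hbe : b = ENNReal.ofReal B := (ENNReal.ofReal_toReal hb).symm
  rw [hae, hbe, ENNReal.ofReal_rpow_of_nonneg hA0 hp0, ENNReal.ofReal_rpow_of_nonneg hB0 hp0,
    ← ENNReal.ofReal_sub _ (Real.rpow_nonneg hB0 p), ← ENNReal.ofReal_sub _ hB0]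
  calc ENNReal.ofReal (A ^ p - B ^ p) ≤ ENNReal.ofReal (p * (A - B) * A ^ (p - 1)) :=
        ENNReal.ofReal_le_ofReal (csq_real_mvt hp hB0 hBA)
    _ = ENNReal.ofReal p * (ENNReal.ofReal (A - B) * ENNReal.ofReal (A ^ (p - 1))) := by
        rw [ENNReal.ofReal_mul (mul_nonneg hp0 (sub_nonneg.2 hBA)), ENNReal.ofReal_mul hp0, mul_assoc]
    _ = ENNReal.ofReal p * (ENNReal.ofReal (A - B) * (ENNReal.ofReal A) ^ (p - 1)) := by
        rw [ENNReal.ofReal_rpow_of_nonneg hA0 (by linarith)]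


lemma csq_condexp_mul_le {Ω : Type*} {m0 : MeasurableSpace Ω} {μ : Measure Ω}
    {m : MeasurableSpace Ω} (hm : m ≤ m0) [SigmaFinite (μ.trim hm)]
    {u : Ω → ℝ} (hu : 0 ≤ u) (hum : Measurable[m0] u)
    {φ : Ω → ℝ≥0∞} (hφ : Measurable[m] φ) :
    ∫⁻ ω, ENNReal.ofReal ((μ[u|m]) ω) * φ ω ∂μ ≤ ∫⁻ ω, ENNReal.ofReal (u ω) * φ ω ∂μ := by
  by_cases hui : Integrable u μ
  · have hf_meas : Measurable[m0] fun ω => ENNReal.ofReal ((μ[u|m]) ω) :=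
      ENNReal.measurable_ofReal.comp (stronglyMeasurable_condExp.mono hm).measurable
    have hu_meas : Measurable[m0] fun ω => ENNReal.ofReal (u ω) :=
      ENNReal.measurable_ofReal.comp hum
    refine @Measurable.ennreal_induction Ω m
      (fun ψ => ∫⁻ ω, ENNReal.ofReal ((μ[u|m]) ω) * ψ ω ∂μ
        ≤ ∫⁻ ω, ENNReal.ofReal (u ω) * ψ ω ∂μ) ?_ ?_ ?_ φ hφ
    · -- indicator
      intro c s hs
      have hrw : ∀ (h : Ω → ℝ≥0∞),
          (fun ω => h ω * s.indicator (fun _ => c) ω) = s.indicator (fun ω => c * h ω) := by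
        intro h; ext ω; by_cases hω : ω ∈ s <;> simp [hω, mul_comm]
      simp only [hrw]
      rw [lintegral_indicator (hm s hs), lintegral_indicator (hm s hs),
        lintegral_const_mul c hf_meas, lintegral_const_mul c hu_meas]
      refine mul_le_mul_right (le_of_eq ?_) c
      rw [← ofReal_integral_eq_lintegral_ofReal hui.restrict (ae_restrict_of_ae (ae_of_all _ hu)),
        ← ofReal_integral_eq_lintegral_ofReal integrable_condExp.restrict
          (ae_restrict_of_ae (condExp_nonneg (ae_of_all _ hu))),
        setIntegral_condExp hm hui hs]
    · -- add
      intro ψ₁ ψ₂ _ hψ₁ hψ₂ ih₁ ih₂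
      simp only [Pi.add_apply, mul_add]
      rw [lintegral_add_left (f := fun ω => ENNReal.ofReal ((μ[u|m]) ω) * ψ₁ ω) (hf_meas.mul (hψ₁.mono hm le_rfl)),
        lintegral_add_left (f := fun ω => ENNReal.ofReal (u ω) * ψ₁ ω) (hu_meas.mul (hψ₁.mono hm le_rfl))]
      exact add_le_add ih₁ ih₂
    · -- iSup
      intro ψ hψ hmono ih
      have hmono' : Monotone fun n => fun ω => ENNReal.ofReal ((μ[u|m]) ω) * ψ n ω :=
        fun i j hij ω => mul_le_mul_right (hmono hij ω) _
      calc ∫⁻ ω, ENNReal.ofReal ((μ[u|m]) ω) * (⨆ n, ψ n ω) ∂μ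
          = ∫⁻ ω, ⨆ n, ENNReal.ofReal ((μ[u|m]) ω) * ψ n ω ∂μ := by
            simp_rw [ENNReal.mul_iSup]
        _ = ⨆ n, ∫⁻ ω, ENNReal.ofReal ((μ[u|m]) ω) * ψ n ω ∂μ :=
            lintegral_iSup (fun n => hf_meas.mul ((hψ n).mono hm le_rfl)) hmono'
        _ ≤ ⨆ n, ∫⁻ ω, ENNReal.ofReal (u ω) * ψ n ω ∂μ := iSup_mono ih
        _ ≤ ∫⁻ ω, ENNReal.ofReal (u ω) * (⨆ n, ψ n ω) ∂μ :=
            iSup_le fun n => lintegral_mono fun ω =>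
              mul_le_mul_right (le_iSup (fun n => ψ n ω) n) _
  · simp [condExp_of_not_integrable hui]



lemma csq_min_add_le {x a c : ℝ≥0∞} : min (x + a) c ≤ min x c + a := by
  rcases le_total x c with h | h
  · rw [min_eq_left h]
    exact le_trans (min_le_left _ _) le_rfl
  · rw [min_eq_right h]
    exact le_trans (min_le_right _ _) (le_add_right le_rfl)

lemma csq_core {Ω : Type*} {m0 : MeasurableSpace Ω} {μ : Measure Ω} [IsFiniteMeasure μ]
    (ℱ : Filtration ℕ m0) {p : ℝ} (hp : 1 ≤ p)
    (α U : ℕ → Ω → ℝ≥0∞)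
    (hα : ∀ n, Measurable[ℱ n] (α n))
    (hU : ∀ n, Measurable (U n))
    (key : ∀ n (φ : Ω → ℝ≥0∞), Measurable[ℱ n] φ →
      ∫⁻ ω, α n ω * φ ω ∂μ ≤ ∫⁻ ω, U n ω * φ ω ∂μ) :
    (∫⁻ ω, (∑' n, α n ω) ^ p ∂μ) ^ (1/p)
      ≤ ENNReal.ofReal p * (∫⁻ ω, (∑' n, U n ω) ^ p ∂μ) ^ (1/p) := by
  have hαm : ∀ n, Measurable (α n) := fun n => (hα n).mono (ℱ.le n) le_rfl
  have hA : Measurable fun ω => ∑' n, α n ω := Measurable.ennreal_tsum hαm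
  have hB : Measurable fun ω => ∑' n, U n ω := Measurable.ennreal_tsum hU
  rcases eq_or_lt_of_le hp with rfl | hp1
  · -- p = 1
    simp only [ENNReal.rpow_one, div_one, ENNReal.ofReal_one, one_mul]
    rw [lintegral_tsum fun n => (hαm n).aemeasurable,
      lintegral_tsum fun n => (hU n).aemeasurable]
    refine ENNReal.tsum_le_tsum fun n => ?_
    simpa using key n (fun _ => 1) measurable_const
  · -- p > 1
    have hp0 : (0:ℝ) < p := lt_trans zero_lt_one hp1
    have hp10 : (0:ℝ) ≤ p - 1 := by linarith
    set q : ℝ := Real.conjExponent p with hq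
    have hpq : p.HolderConjugate q := Real.HolderConjugate.conjExponent hp1
    set J : ℝ≥0∞ := ∫⁻ ω, (∑' n, U n ω) ^ p ∂μ with hJ
    -- main estimate for truncations
    have main : ∀ c : ℝ≥0∞, c ≠ ∞ →
        (∫⁻ ω, (min (∑' n, α n ω) c) ^ p ∂μ) ^ (1/p) ≤ ENNReal.ofReal p * J ^ (1/p) := by
      intro c hc
      set T : Ω → ℝ≥0∞ := fun ω => min (∑' n, α n ω) c with hTdef
      have hT : Measurable T := hA.min measurable_const
      have hTc : ∀ ω, T ω ≤ c := fun ω => min_le_right _ _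
      -- the predictable multipliers
      set φ : ℕ → Ω → ℝ≥0∞ :=
        fun k ω => (min (∑ n ∈ Finset.range (k+1), α n ω) c) ^ (p - 1) with hφdef
      have hφmeas : ∀ k, Measurable[ℱ k] (φ k) := by
        intro k
        refine ENNReal.continuous_rpow_const.measurable.comp (Measurable.min ?_ measurable_const)
        exact Finset.measurable_sum _ fun n hn =>
          (hα n).mono (ℱ.mono (Nat.lt_succ_iff.mp (Finset.mem_range.mp hn))) le_rfl
      have hφm0 : ∀ k, Measurable (φ k) := fun k => (hφmeas k).mono (ℱ.le k) le_rfl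
      have hφle : ∀ k ω, φ k ω ≤ T ω ^ (p - 1) := by
        intro k ω
        exact ENNReal.rpow_le_rpow (min_le_min (ENNReal.sum_le_tsum _) le_rfl) hp10
      -- pointwise estimate
      have hpt : ∀ ω, T ω ^ p ≤ ∑' k, ENNReal.ofReal p * (α k ω * φ k ω) := by
        intro ω
        set t : ℕ → ℝ≥0∞ := fun N => min (∑ n ∈ Finset.range N, α n ω) c with htdef
        have htmono : Monotone t := fun N M h => min_le_min
          (Finset.sum_le_sum_of_subset (Finset.range_subset_range.2 h)) le_rfl
        have htc : ∀ N, t N ≠ ∞ := fun N => (lt_of_le_of_lt (min_le_right _ _) hc.lt_top).ne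
        have hTt : T ω = ⨆ N, t N := by
          rw [hTdef]
          simp only [ENNReal.tsum_eq_iSup_nat]
          rw [min_comm, inf_iSup_eq]
          exact iSup_congr fun N => inf_comm c _
        have ht0 : t 0 = 0 := by simp [htdef]
        have tele : ∀ N, (t N) ^ p = ∑ k ∈ Finset.range N, ((t (k+1)) ^ p - (t k) ^ p) := by
          intro N
          induction N with
          | zero => simp [ht0, ENNReal.zero_rpow_of_pos hp0]
          | succ N ih =>
            rw [Finset.sum_range_succ, ← ih,
              add_tsub_cancel_of_le (ENNReal.rpow_le_rpow (htmono (Nat.le_succ N)) hp0.le)]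
        have hTp : T ω ^ p = ∑' k, ((t (k+1)) ^ p - (t k) ^ p) := by
          rw [hTt, csq_iSup_rpow hp0, ENNReal.tsum_eq_iSup_nat]
          exact iSup_congr tele |>.symm ▸ rfl
        have hstep : ∀ k, (t (k+1)) ^ p - (t k) ^ p ≤ ENNReal.ofReal p * (α k ω * φ k ω) := by
          intro k
          refine (csq_ennreal_mvt hp (htmono (Nat.le_succ k)) (htc (k+1))).trans ?_
          refine mul_le_mul_right ?_ _
          have hdiff : t (k+1) - t k ≤ α k ω := by
            rw [tsub_le_iff_right]
            calc t (k+1) = min ((∑ n ∈ Finset.range k, α n ω) + α k ω) c := by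
                  rw [htdef]; simp [Finset.sum_range_succ]
              _ ≤ t k + α k ω := csq_min_add_le
              _ = α k ω + t k := add_comm _ _
          have hφeq : φ k ω = t (k+1) ^ (p-1) := rfl
          rw [hφeq]
          exact mul_le_mul_left hdiff _
        rw [hTp]
        exact ENNReal.tsum_le_tsum hstep
      -- integrate the pointwise estimate
      have hTp1 : Measurable fun ω => T ω ^ (p-1) :=
        ENNReal.continuous_rpow_const.measurable.comp hT
      have hint : ∫⁻ ω, T ω ^ p ∂μ
          ≤ ENNReal.ofReal p * ∫⁻ ω, (∑' n, U n ω) * T ω ^ (p-1) ∂μ := by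
        calc ∫⁻ ω, T ω ^ p ∂μ
            ≤ ∫⁻ ω, ∑' k, ENNReal.ofReal p * (α k ω * φ k ω) ∂μ := lintegral_mono hpt
          _ = ∑' k, ∫⁻ ω, ENNReal.ofReal p * (α k ω * φ k ω) ∂μ :=
              lintegral_tsum fun k =>
                (measurable_const.mul ((hαm k).mul (hφm0 k))).aemeasurable
          _ = ∑' k, ENNReal.ofReal p * ∫⁻ ω, α k ω * φ k ω ∂μ :=
              tsum_congr fun k => lintegral_const_mul _ ((hαm k).mul (hφm0 k))
          _ = ENNReal.ofReal p * ∑' k, ∫⁻ ω, α k ω * φ k ω ∂μ := ENNReal.tsum_mul_left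
          _ ≤ ENNReal.ofReal p * ∑' k, ∫⁻ ω, U k ω * T ω ^ (p-1) ∂μ := by
              refine mul_le_mul_right (ENNReal.tsum_le_tsum fun k => ?_) _
              exact (key k (φ k) (hφmeas k)).trans
                (lintegral_mono fun ω => mul_le_mul_right (hφle k ω) _)
          _ = ENNReal.ofReal p * ∫⁻ ω, (∑' k, U k ω) * T ω ^ (p-1) ∂μ := by
              rw [← lintegral_tsum (f := fun k ω => U k ω * T ω ^ (p-1)) fun k => ((hU k).mul hTp1).aemeasurable]
              exact congrArg _ (lintegral_congr fun ω => ENNReal.tsum_mul_right)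
      have hTq : ∀ ω, (T ω ^ (p-1)) ^ q = T ω ^ p := fun ω => by
        rw [← ENNReal.rpow_mul, hpq.sub_one_mul_conj]
      have hold : ∫⁻ ω, (∑' n, U n ω) * T ω ^ (p-1) ∂μ
          ≤ J ^ (1/p) * (∫⁻ ω, T ω ^ p ∂μ) ^ (1/q) := by
        have h := ENNReal.lintegral_mul_le_Lp_mul_Lq μ hpq hB.aemeasurable hTp1.aemeasurable
        simp only [Pi.mul_apply] at h
        refine h.trans (le_of_eq ?_)
        rw [hJ]
        congr 1
        exact congrArg (· ^ (1/q)) (lintegral_congr fun ω => hTq ω)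
      set I : ℝ≥0∞ := ∫⁻ ω, T ω ^ p ∂μ with hI
      have hIfin : I ≠ ∞ := by
        have hle : I ≤ c ^ p * μ Set.univ := by
          rw [← lintegral_const]
          exact lintegral_mono fun ω => ENNReal.rpow_le_rpow (hTc ω) hp0.le
        exact ne_top_of_le_ne_top
          (ENNReal.mul_ne_top (ENNReal.rpow_ne_top_of_nonneg hp0.le hc) (measure_ne_top μ _)) hle
      by_cases hI0 : I = 0
      · rw [hI0, ENNReal.zero_rpow_of_pos (by positivity)]
        exact zero_le
      · have hq0 : (0:ℝ) < q := hpq.symm.pos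
        have key2 : I ≤ ENNReal.ofReal p * J ^ (1/p) * I ^ (1/q) := by
          calc I ≤ ENNReal.ofReal p * ∫⁻ ω, (∑' n, U n ω) * T ω ^ (p-1) ∂μ := hint
            _ ≤ ENNReal.ofReal p * (J ^ (1/p) * I ^ (1/q)) := mul_le_mul_right hold _
            _ = ENNReal.ofReal p * J ^ (1/p) * I ^ (1/q) := (mul_assoc _ _ _).symm
        have hIq0 : I ^ ((1:ℝ)/q) ≠ 0 := by
          simp [ENNReal.rpow_eq_zero_iff, hI0, hIfin]
        have hIqt : I ^ ((1:ℝ)/q) ≠ ∞ :=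
          ENNReal.rpow_ne_top_of_nonneg (by positivity) hIfin
        refine (ENNReal.mul_le_mul_iff_left hIq0 hIqt).mp ?_
        rw [← ENNReal.rpow_add _ _ hI0 hIfin,
          show (1:ℝ)/p + 1/q = 1 by simpa [one_div] using hpq.inv_add_inv_eq_one,
          ENNReal.rpow_one]
        exact key2
    -- let the truncation level tend to infinity
    have hsup : ∀ ω, (⨆ k : ℕ, min (∑' n, α n ω) (k:ℝ≥0∞)) = ∑' n, α n ω := by
      intro ω
      refine le_antisymm (iSup_le fun k => min_le_left _ _) ?_
      by_cases hω : (∑' n, α n ω) = ∞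
      · rw [hω]
        calc (⊤:ℝ≥0∞) = ⨆ k : ℕ, (k:ℝ≥0∞) := ENNReal.iSup_natCast.symm
          _ ≤ ⨆ k : ℕ, min (⊤:ℝ≥0∞) (k:ℝ≥0∞) := iSup_mono fun k => by simp
      · obtain ⟨k, hk⟩ := ENNReal.exists_nat_gt hω
        exact le_iSup_of_le k (le_of_eq (min_eq_left hk.le).symm)
    have hmeas : ∀ k : ℕ, Measurable fun ω => (min (∑' n, α n ω) (k:ℝ≥0∞)) ^ p :=
      fun k => ENNReal.continuous_rpow_const.measurable.comp (hA.min measurable_const)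
    have hmono : Monotone fun (k:ℕ) => fun ω => (min (∑' n, α n ω) (k:ℝ≥0∞)) ^ p := by
      intro k l hkl ω
      exact ENNReal.rpow_le_rpow (min_le_min le_rfl (Nat.cast_le.2 hkl)) hp0.le
    calc (∫⁻ ω, (∑' n, α n ω) ^ p ∂μ) ^ (1/p)
        = (⨆ k : ℕ, ∫⁻ ω, (min (∑' n, α n ω) (k:ℝ≥0∞)) ^ p ∂μ) ^ (1/p) := by
          rw [← lintegral_iSup hmeas hmono]
          congr 1
          refine lintegral_congr fun ω => ?_
          rw [← csq_iSup_rpow hp0, hsup ω]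
      _ = ⨆ k : ℕ, (∫⁻ ω, (min (∑' n, α n ω) (k:ℝ≥0∞)) ^ p ∂μ) ^ (1/p) :=
          csq_iSup_rpow (by positivity) _
      _ ≤ ENNReal.ofReal p * J ^ (1/p) :=
          iSup_le fun k => main (k:ℝ≥0∞) (ENNReal.natCast_ne_top k)


/-- **Conditional square function bound.**
For an adapted process `g` with `g 0 = 0`, the conditional square function `sg` satisfies
`‖sg‖_{L^r} ≤ (r/2)^{1/2} ‖S₂ g‖_{L^r}` for every `r ∈ [2,∞)`. -/
theorem conditional_square_function_Lr
    {X : Type*} [NormedAddCommGroup X] [NormedSpace ℝ X] [CompleteSpace X]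
    {Ω : Type*} {m0 : MeasurableSpace Ω} {μ : Measure Ω} [IsProbabilityMeasure μ]
    (ℱ : Filtration ℕ m0)
    (g : ℕ → Ω → X) (hg : StronglyAdapted ℱ g) (hg0 : g 0 = 0)
    (r : ℝ) (hr : 2 ≤ r) :
    (∫⁻ ω, ((∑' n : ℕ,
        ENNReal.ofReal ((μ[fun ω' => ‖g (n+1) ω' - g n ω'‖ ^ 2 | ℱ n]) ω)) ^ ((1:ℝ)/2)) ^ r ∂μ)
        ^ (1/r)
      ≤ ENNReal.ofReal (Real.sqrt (r / 2)) *
        (∫⁻ ω, ((∑' n : ℕ,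
            (‖g (n+1) ω - g n ω‖₊ : ℝ≥0∞) ^ (2:ℝ)) ^ ((1:ℝ)/2)) ^ r ∂μ) ^ (1/r) := by
  have hr0 : (0:ℝ) < r := by linarith
  set p : ℝ := r / 2 with hpdef
  have hp1 : 1 ≤ p := by rw [hpdef]; linarith
  have hp0 : (0:ℝ) < p := by linarith
  have hdm : ∀ n : ℕ, StronglyMeasurable[m0] fun ω => g (n+1) ω - g n ω := fun n =>
    ((hg (n+1)).mono (ℱ.le _)).sub ((hg n).mono (ℱ.le _))
  have hα : ∀ n, Measurable[ℱ n]
      fun ω => ENNReal.ofReal ((μ[fun ω' => ‖g (n+1) ω' - g n ω'‖ ^ 2 | ℱ n]) ω) :=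
    fun n => ENNReal.measurable_ofReal.comp stronglyMeasurable_condExp.measurable
  have hU : ∀ n, Measurable fun ω => (‖g (n+1) ω - g n ω‖₊ : ℝ≥0∞) ^ (2:ℝ) := fun n =>
    ENNReal.continuous_rpow_const.measurable.comp
      (measurable_coe_nnreal_ennreal.comp (hdm n).nnnorm.measurable)
  have hUeq : ∀ n (ω : Ω),
      ENNReal.ofReal (‖g (n+1) ω - g n ω‖ ^ 2) = (‖g (n+1) ω - g n ω‖₊ : ℝ≥0∞) ^ (2:ℝ) := by
    intro n ω
    rw [show ((2:ℝ)) = ((2:ℕ):ℝ) by norm_num, ENNReal.rpow_natCast,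
      ← enorm_eq_nnnorm, ← ofReal_norm, ← ENNReal.ofReal_pow (norm_nonneg _)]
  have key : ∀ n (φ : Ω → ℝ≥0∞), Measurable[ℱ n] φ →
      ∫⁻ ω, ENNReal.ofReal ((μ[fun ω' => ‖g (n+1) ω' - g n ω'‖ ^ 2 | ℱ n]) ω) * φ ω ∂μ
        ≤ ∫⁻ ω, (‖g (n+1) ω - g n ω‖₊ : ℝ≥0∞) ^ (2:ℝ) * φ ω ∂μ := by
    intro n φ hφ
    have h := csq_condexp_mul_le (μ := μ) (ℱ.le n)
      (u := fun ω' => ‖g (n+1) ω' - g n ω'‖ ^ 2) (fun ω' => by positivity)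
      ((hdm n).norm.measurable.pow_const 2) hφ
    refine h.trans (le_of_eq (lintegral_congr fun ω => ?_))
    rw [hUeq n ω]
  have final := csq_core ℱ hp1
    (fun n ω => ENNReal.ofReal ((μ[fun ω' => ‖g (n+1) ω' - g n ω'‖ ^ 2 | ℱ n]) ω))
    (fun n ω => (‖g (n+1) ω - g n ω‖₊ : ℝ≥0∞) ^ (2:ℝ)) hα hU key
  have e1 : ∀ x : ℝ≥0∞, (x ^ ((1:ℝ)/2)) ^ r = x ^ p := fun x => by
    rw [← ENNReal.rpow_mul]; congr 1; rw [hpdef]; ring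
  simp only [e1]
  have e2 : ∀ X : ℝ≥0∞, X ^ ((1:ℝ)/r) = (X ^ ((1:ℝ)/p)) ^ ((1:ℝ)/2) := fun X => by
    rw [← ENNReal.rpow_mul]; congr 1; rw [hpdef]; field_simp
  rw [show (1/r) = ((1:ℝ)/r) by norm_num] at *
  rw [e2, e2]
  calc ((∫⁻ ω, (∑' n : ℕ,
        ENNReal.ofReal ((μ[fun ω' => ‖g (n+1) ω' - g n ω'‖ ^ 2 | ℱ n]) ω)) ^ p ∂μ)
          ^ ((1:ℝ)/p)) ^ ((1:ℝ)/2)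
      ≤ (ENNReal.ofReal p *
          (∫⁻ ω, (∑' n : ℕ, (‖g (n+1) ω - g n ω‖₊ : ℝ≥0∞) ^ (2:ℝ)) ^ p ∂μ) ^ ((1:ℝ)/p))
          ^ ((1:ℝ)/2) := ENNReal.rpow_le_rpow final (by norm_num)
    _ = ENNReal.ofReal (Real.sqrt (r / 2)) *
          ((∫⁻ ω, (∑' n : ℕ, (‖g (n+1) ω - g n ω‖₊ : ℝ≥0∞) ^ (2:ℝ)) ^ p ∂μ) ^ ((1:ℝ)/p))
          ^ ((1:ℝ)/2) := by
        rw [ENNReal.mul_rpow_of_nonneg _ _ (by norm_num : (0:ℝ) ≤ 1/2),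
          ENNReal.ofReal_rpow_of_pos hp0, ← Real.sqrt_eq_rpow, hpdef]
end

section
/- Let X be a Banach space, φ : X → ℝ a convex function, and x ∈ X a point such that L := limsup_{y→0} |φ(x+y) − φ(x)|/‖y‖ < ∞ and lim_{y→0} (φ(x+y) + φ(x−y) − 2φ(x))/‖y‖ = 0. Then φ is Fréchet differentiable at x, and its Fréchet derivative satisfies ‖φ'(x)‖_{X*} ≤ L. -/
open Filter Topology

/-- **Fréchet differentiability of convex functions.**
If `φ` is convex, locally Lipschitz-bounded at `x` with bound `L` (in the limsup sense),
and the symmetric difference quotient tends to `0`, then `φ` is Fréchet differentiable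
at `x` with `‖φ'(x)‖ ≤ L`. -/
theorem frechet_differentiable_of_convex
    {X : Type*} [NormedAddCommGroup X] [NormedSpace ℝ X]
    (φ : X → ℝ) (hφ : ConvexOn ℝ Set.univ φ) (x : X)
    (L : ENNReal)
    (hL : L = Filter.limsup
      (fun y : X => ENNReal.ofReal (|φ (x + y) - φ x| / ‖y‖)) (𝓝[≠] (0 : X)))
    (hLfin : L < ⊤)
    (hsym : Filter.Tendsto
      (fun y : X => (φ (x + y) + φ (x - y) - 2 * φ x) / ‖y‖) (𝓝[≠] (0 : X)) (𝓝 0)) :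
    ∃ A : X →L[ℝ] ℝ, HasFDerivAt φ A x ∧ ENNReal.ofReal ‖A‖ ≤ L := by
  classical
  haveI : Nonempty (Set.Ioi (0:ℝ)) := ⟨⟨1, by norm_num⟩⟩
  set L' : ℝ := L.toReal with hL'def
  have hL'nonneg : 0 ≤ L' := ENNReal.toReal_nonneg
  -- the slope function
  set sl : X → ℝ → ℝ := fun v t => (φ (x + t • v) - φ x) / t with hsldef
  -- convexity of `t ↦ φ (x + t • v)`
  have hg : ∀ v : X, ConvexOn ℝ Set.univ (fun t : ℝ => φ (x + t • v)) := by
    intro v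
    refine ⟨convex_univ, ?_⟩
    intro t₁ _ t₂ _ a b ha hb hab
    have key := hφ.2 (Set.mem_univ (x + t₁ • v)) (Set.mem_univ (x + t₂ • v)) ha hb hab
    have hb1 : b = 1 - a := by linarith
    subst hb1
    have harg : x + (a * t₁ + (1-a) * t₂) • v
        = a • (x + t₁ • v) + (1-a) • (x + t₂ • v) := by
      module
    simp only [smul_eq_mul]
    rw [harg]
    simpa [smul_eq_mul] using key
  -- monotonicity of slopes
  have slope_mono : ∀ (v : X) (t₁ t₂ : ℝ), t₁ ≠ 0 → t₂ ≠ 0 → t₁ ≤ t₂ →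
      sl v t₁ ≤ sl v t₂ := by
    intro v t₁ t₂ h1 h2 h12
    have key := (hg v).secant_mono (Set.mem_univ (0:ℝ)) (Set.mem_univ t₁)
      (Set.mem_univ t₂) h1 h2 h12
    simpa [hsldef] using key
  -- slopes are bounded below
  have bdd : ∀ v : X, BddBelow (Set.range fun t : Set.Ioi (0:ℝ) => sl v (t : ℝ)) := by
    intro v
    refine ⟨sl v (-1), ?_⟩
    rintro s ⟨⟨t, ht⟩, rfl⟩
    exact slope_mono v (-1) t (by norm_num) (ne_of_gt ht) (by linarith [Set.mem_Ioi.mp ht])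
  -- the sublinear functional: directional derivative
  set p : X → ℝ := fun v => ⨅ t : Set.Ioi (0:ℝ), sl v (t : ℝ) with hpdef
  have p_le_sl : ∀ (v : X) (t : ℝ), 0 < t → p v ≤ sl v t := by
    intro v t ht
    exact ciInf_le (bdd v) ⟨t, ht⟩
  have le_p : ∀ (v : X) (c : ℝ), (∀ t : ℝ, 0 < t → c ≤ sl v t) → c ≤ p v := by
    intro v c hc
    exact le_ciInf fun ⟨t, ht⟩ => hc t ht
  have sl_zero : ∀ t : ℝ, sl (0 : X) t = 0 := by
    intro t; simp [hsldef]
  have p_zero : p 0 = 0 := by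
    apply le_antisymm
    · simpa [sl_zero] using p_le_sl 0 1 one_pos
    · exact le_p 0 0 fun t ht => by simp [sl_zero]
  -- positive homogeneity
  have sl_smul : ∀ (c : ℝ), 0 < c → ∀ (v : X) (t : ℝ), t ≠ 0 →
      sl (c • v) t = c * sl v (c * t) := by
    intro c hc v t ht
    have : t • c • v = (c * t) • v := by rw [smul_smul, mul_comm]
    rw [hsldef]
    simp only [this]
    field_simp
  have p_homog : ∀ (c : ℝ), 0 < c → ∀ v : X, p (c • v) = c * p v := by
    intro c hc v
    apply le_antisymm
    · -- p (c•v) ≤ c * p v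
      rw [← div_le_iff₀' hc]
      apply le_p
      intro t ht
      have h1 : p (c • v) ≤ sl (c • v) (t/c) := p_le_sl _ _ (by positivity)
      rw [sl_smul c hc v (t/c) (by positivity)] at h1
      have hct : c * (t/c) = t := by field_simp
      rw [hct] at h1
      rw [div_le_iff₀' hc]
      exact h1
    · apply le_p
      intro t ht
      rw [sl_smul c hc v t (ne_of_gt ht)]
      exact mul_le_mul_of_nonneg_left (p_le_sl v (c*t) (by positivity)) hc.le
  -- subadditivity
  have sl_add : ∀ (u v : X) (t : ℝ), 0 < t →
      sl (u + v) t ≤ sl u (2*t) + sl v (2*t) := by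
    intro u v t ht
    have key := hφ.2 (Set.mem_univ (x + (2*t) • u)) (Set.mem_univ (x + (2*t) • v))
      (by norm_num : (0:ℝ) ≤ 1/2) (by norm_num : (0:ℝ) ≤ 1/2) (by norm_num)
    have harg : (1/2 : ℝ) • (x + (2*t) • u) + (1/2 : ℝ) • (x + (2*t) • v)
        = x + t • (u + v) := by module
    rw [harg] at key
    simp only [smul_eq_mul] at key
    rw [hsldef]
    simp only
    rw [← add_div, div_le_div_iff₀ ht (by linarith : (0:ℝ) < 2*t)]
    nlinarith [key]
  have p_subadd : ∀ u v : X, p (u + v) ≤ p u + p v := by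
    intro u v
    have step1 : ∀ t₁ : ℝ, 0 < t₁ → ∀ s : ℝ, 0 < s →
        p (u + v) ≤ sl u (2*t₁) + sl v s := by
      intro t₁ ht₁ s hs
      set t : ℝ := min t₁ (s/2) with htdef
      have ht : 0 < t := lt_min ht₁ (by linarith)
      have h1 : sl (u+v) t ≤ sl u (2*t) + sl v (2*t) := sl_add u v t ht
      have h2 : sl u (2*t) ≤ sl u (2*t₁) :=
        slope_mono u (2*t) (2*t₁) (by positivity) (by positivity)
          (by linarith [min_le_left t₁ (s/2)])
      have h3 : sl v (2*t) ≤ sl v s :=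
        slope_mono v (2*t) s (by positivity) (ne_of_gt hs)
          (by linarith [min_le_right t₁ (s/2)])
      have := p_le_sl (u+v) t ht
      linarith
    have step2 : ∀ t₁ : ℝ, 0 < t₁ → p (u + v) - sl u (2*t₁) ≤ p v := by
      intro t₁ ht₁
      apply le_p
      intro s hs
      linarith [step1 t₁ ht₁ s hs]
    have step3 : p (u + v) - p v ≤ p u := by
      apply le_p
      intro s hs
      have := step2 (s/2) (by linarith)
      have h2s : 2 * (s/2) = s := by ring
      rw [h2s] at this
      linarith
    linarith
  -- the bound p v ≤ L' * ‖v‖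
  have p_bound : ∀ v : X, p v ≤ L' * ‖v‖ := by
    intro v
    rcases eq_or_ne v 0 with rfl | hv
    · simp [p_zero]
    · have hvnorm : 0 < ‖v‖ := norm_pos_iff.mpr hv
      apply le_of_forall_pos_le_add
      intro ε hε
      set ε' : ℝ := ε / ‖v‖ with hε'def
      have hε' : 0 < ε' := by positivity
      -- eventual bound from the limsup
      have hlt : L < L + ENNReal.ofReal ε' :=
        ENNReal.lt_add_right hLfin.ne (by simpa using (ENNReal.ofReal_pos.mpr hε').ne')
      have hlt2 : Filter.limsup
          (fun y : X => ENNReal.ofReal (|φ (x + y) - φ x| / ‖y‖)) (𝓝[≠] (0 : X))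
          < L + ENNReal.ofReal ε' := by rw [← hL]; exact hlt
      have hev := Filter.eventually_lt_of_limsup_lt hlt2
      rw [eventually_nhdsWithin_iff] at hev
      rw [Metric.eventually_nhds_iff] at hev
      obtain ⟨δ, hδ, hball⟩ := hev
      set t : ℝ := δ / (2 * ‖v‖) with htdef
      have ht : 0 < t := by positivity
      have hynorm : ‖t • v‖ = δ / 2 := by
        rw [norm_smul, Real.norm_eq_abs, abs_of_pos ht, htdef]
        field_simp
      have hyne : t • v ≠ 0 := by
        intro h
        rw [h, norm_zero] at hynorm
        linarith
      have hydist : dist (t • v) (0 : X) < δ := by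
        rw [dist_zero_right, hynorm]; linarith
      have hkey := hball hydist (by simpa using hyne)
      -- convert to a real inequality
      have hLne : L ≠ ⊤ := hLfin.ne
      rw [← ENNReal.ofReal_toReal hLne, ← ENNReal.ofReal_add hL'nonneg hε'.le,
        ENNReal.ofReal_lt_ofReal_iff (by positivity)] at hkey
      -- hkey : |φ (x + t•v) - φ x| / ‖t•v‖ < L' + ε'
      have hsl1 : sl v t ≤ |φ (x + t • v) - φ x| / t := by
        rw [hsldef]
        simp only
        gcongr
        · exact le_abs_self _
      have heq : |φ (x + t • v) - φ x| / t = (|φ (x + t • v) - φ x| / ‖t • v‖) * ‖v‖ := by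
        rw [norm_smul, Real.norm_eq_abs, abs_of_pos ht]
        field_simp
      have : sl v t ≤ (L' + ε') * ‖v‖ := by
        rw [heq] at hsl1
        calc sl v t ≤ (|φ (x + t • v) - φ x| / ‖t • v‖) * ‖v‖ := hsl1
          _ ≤ (L' + ε') * ‖v‖ := mul_le_mul_of_nonneg_right hkey.le (norm_nonneg v)
      have hfin : (L' + ε') * ‖v‖ = L' * ‖v‖ + ε := by
        rw [hε'def]; field_simp
      calc p v ≤ sl v t := p_le_sl v t ht
        _ = (L' + ε') * ‖v‖ - ((L' + ε') * ‖v‖ - sl v t) := by ring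
        _ ≤ (L' + ε') * ‖v‖ := by linarith
        _ = L' * ‖v‖ + ε := hfin
  -- Hahn–Banach: get a linear functional dominated by p
  obtain ⟨g, -, hg_le⟩ := exists_extension_of_le_sublinear
    ⟨⊥, 0⟩ p (fun c hc v => p_homog c hc v) p_subadd
    (by
      rintro ⟨z, hz⟩
      have hz0 : z = 0 := by simpa using hz
      subst hz0
      simp [p_zero])
  -- g is bounded
  have hg_bound : ∀ v : X, ‖g v‖ ≤ L' * ‖v‖ := by
    intro v
    rw [Real.norm_eq_abs, abs_le]
    constructor
    · have h1 : g (-v) ≤ p (-v) := hg_le (-v)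
      have h2 : p (-v) ≤ L' * ‖v‖ := by simpa using p_bound (-v)
      have h3 : g (-v) = - g v := map_neg g v
      linarith
    · exact (hg_le v).trans (p_bound v)
  set A : X →L[ℝ] ℝ := g.mkContinuous L' hg_bound with hAdef
  have hAnorm : ‖A‖ ≤ L' := g.mkContinuous_norm_le hL'nonneg hg_bound
  have hA_apply : ∀ v, A v = g v := fun v => rfl
  -- A is a subgradient
  have subgrad : ∀ v : X, A v ≤ φ (x + v) - φ x := by
    intro v
    have h1 : p v ≤ sl v 1 := p_le_sl v 1 one_pos
    have h2 : sl v 1 = φ (x + v) - φ x := by simp [hsldef]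
    rw [hA_apply]
    linarith [hg_le v]
  -- Fréchet differentiability
  have hderiv : HasFDerivAt φ A x := by
    rw [hasFDerivAt_iff_isLittleO_nhds_zero, Asymptotics.isLittleO_iff]
    intro c hc
    have hev := Metric.tendsto_nhds.mp hsym c hc
    rw [eventually_nhdsWithin_iff] at hev
    filter_upwards [hev] with h hh
    rcases eq_or_ne h 0 with rfl | hne
    · simp
    · have h0 : (0:ℝ) < ‖h‖ := norm_pos_iff.mpr hne
      have hψ1 : 0 ≤ φ (x + h) - φ x - A h := by linarith [subgrad h]
      have hψ2 : 0 ≤ φ (x - h) - φ x - A (-h) := by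
        have := subgrad (-h)
        rw [← sub_eq_add_neg] at this
        linarith
      have hAneg : A (-h) = - A h := map_neg A h
      have hlt := hh (by simpa using hne)
      rw [Real.dist_eq, sub_zero] at hlt
      have hupper := (abs_lt.mp hlt).2
      rw [div_lt_iff₀ h0] at hupper
      rw [Real.norm_eq_abs, abs_of_nonneg hψ1]
      nlinarith [hψ2, hAneg]
  refine ⟨A, hderiv, ?_⟩
  calc ENNReal.ofReal ‖A‖ ≤ ENNReal.ofReal L' := ENNReal.ofReal_le_ofReal hAnorm
    _ = L := ENNReal.ofReal_toReal hLfin.ne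
end

section
/- Let p ∈ (1,2] and let X be a (p,C)-smooth Banach space. Then the function φ(x) := ‖x‖^p is Fréchet differentiable at every point x ∈ X, and its Fréchet derivative satisfies ‖φ'(x)‖_{X*} ≤ p‖x‖^{p−1}. -/
open Filter Asymptotics

/-- tangent line inequality for `t ↦ t^p`, `p ≥ 1`. -/
lemma aux_tangent_rpow {p : ℝ} (hp : 1 ≤ p) {s t : ℝ} (hs : 0 < s) (ht : 0 ≤ t) :
    s ^ p + p * s ^ (p - 1) * (t - s) ≤ t ^ p := by
  have hu : -1 ≤ t / s - 1 := by
    have : 0 ≤ t / s := div_nonneg ht hs.le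
    linarith
  have hb := one_add_mul_self_le_rpow_one_add hu hp
  have h1 : 1 + (t / s - 1) = t / s := by ring
  rw [h1, Real.div_rpow ht hs.le] at hb
  have hsp : (0:ℝ) < s ^ p := Real.rpow_pos_of_pos hs p
  have := mul_le_mul_of_nonneg_left hb hsp.le
  rw [mul_div_cancel₀ _ (ne_of_gt hsp)] at this
  calc s ^ p + p * s ^ (p - 1) * (t - s)
      = s ^ p * (1 + p * (t / s - 1)) := by
        have hsp1 : s ^ p = s ^ (p - 1) * s := by
          rw [← Real.rpow_add_one (ne_of_gt hs) (p-1)]; ring_nf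
        rw [hsp1]
        field_simp
    _ ≤ t ^ p := this

/-- `‖y‖^p = o(y)` near `0` for `p > 1`. -/
lemma aux_littleo {X : Type*} [NormedAddCommGroup X] {p : ℝ} (hp : 1 < p) :
    (fun y : X => ‖y‖ ^ p) =o[nhds (0:X)] fun y => y := by
  rw [isLittleO_iff]
  intro c hc
  have hp1 : (0:ℝ) ≤ p - 1 := by linarith
  have ht : Tendsto (fun y : X => ‖y‖ ^ (p - 1)) (nhds 0) (nhds 0) := by
    have := ((continuous_norm.tendsto (0:X)).rpow_const (Or.inr hp1))
    simpa [Real.zero_rpow (by linarith : p - 1 ≠ 0)] using this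
  filter_upwards [ht.eventually (ge_mem_nhds hc)] with y hy
  have hny : (0:ℝ) ≤ ‖y‖ := norm_nonneg y
  have hsplit : ‖y‖ ^ p = ‖y‖ ^ (p - 1) * ‖y‖ := by
    rcases eq_or_lt_of_le hny with h0 | h0
    · simp [← h0, Real.zero_rpow (by linarith : p ≠ 0),
        Real.zero_rpow (by linarith : p - 1 ≠ 0)]
    · rw [← Real.rpow_add_one h0.ne' (p - 1)]
      ring_nf
  rw [Real.norm_eq_abs, abs_of_nonneg (Real.rpow_nonneg hny p), hsplit]
  exact mul_le_mul_of_nonneg_right hy hny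

/-- **Differentiability of `‖·‖^p` on a `(p,C)`-smooth space.**
If `X` is `(p,C)`-smooth with `p ∈ (1,2]`, then `φ(x) = ‖x‖^p` is Fréchet differentiable at
every point, with `‖φ'(x)‖ ≤ p ‖x‖^{p-1}`. -/
theorem frechet_differentiable_norm_rpow_of_smooth
    {X : Type*} [NormedAddCommGroup X] [NormedSpace ℝ X]
    (p C : ℝ) (hp : 1 < p) (hp2 : p ≤ 2) (hC : 0 < C)
    (hsmooth : ∀ x y : X,
      (1/2) * (‖x + y‖ ^ p + ‖x - y‖ ^ p) ≤ ‖x‖ ^ p + C ^ p * ‖y‖ ^ p) :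
    ∀ x : X, ∃ A : X →L[ℝ] ℝ,
      HasFDerivAt (fun z : X => ‖z‖ ^ p) A x ∧ ‖A‖ ≤ p * ‖x‖ ^ (p - 1) := by
  intro x
  by_cases hx : x = 0
  · refine ⟨0, ?_, ?_⟩
    · rw [hasFDerivAt_iff_isLittleO_nhds_zero]
      subst hx
      simpa [Real.zero_rpow (by linarith : p ≠ 0)] using (aux_littleo (X := X) hp)
    · subst hx
      simp [Real.zero_rpow (by linarith : p - 1 ≠ 0)]
  · obtain ⟨f, hf1, hfx⟩ := exists_dual_vector ℝ x (norm_ne_zero_iff.mpr hx)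
    have hxn : (0:ℝ) < ‖x‖ := norm_pos_iff.mpr hx
    set a : ℝ := p * ‖x‖ ^ (p - 1) with ha
    have hapos : 0 < a := by positivity
    refine ⟨a • f, ?_, ?_⟩
    · -- subgradient inequality: for all y, a * f y ≤ ‖x + y‖^p - ‖x‖^p
      have hsub : ∀ y : X, a * f y ≤ ‖x + y‖ ^ p - ‖x‖ ^ p := by
        intro y
        have h1 : f y ≤ ‖x + y‖ - ‖x‖ := by
          have hfx' : f x = ‖x‖ := by exact_mod_cast hfx
          have : f y = f (x + y) - ‖x‖ := by
            rw [map_add, hfx']; ring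
          rw [this]
          have := f.le_opNorm (x + y)
          rw [hf1, one_mul] at this
          have h2 : f (x + y) ≤ ‖f (x + y)‖ := le_abs_self _
          linarith
        have h2 := aux_tangent_rpow hp.le hxn (norm_nonneg (x + y))
        have h3 : a * f y ≤ a * (‖x + y‖ - ‖x‖) :=
          mul_le_mul_of_nonneg_left h1 hapos.le
        calc a * f y ≤ a * (‖x + y‖ - ‖x‖) := h3
          _ ≤ ‖x + y‖ ^ p - ‖x‖ ^ p := by rw [ha]; linarith
      rw [hasFDerivAt_iff_isLittleO_nhds_zero]
      have hupper : ∀ y : X, ‖x + y‖ ^ p - ‖x‖ ^ p - a * f y ≤ 2 * C ^ p * ‖y‖ ^ p := by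
        intro y
        have hs := hsmooth x y
        have h4 := hsub (-y)
        rw [map_neg] at h4
        have h5 : ‖x + -y‖ = ‖x - y‖ := by rw [← sub_eq_add_neg]
        rw [h5] at h4
        linarith
      have hlower : ∀ y : X, 0 ≤ ‖x + y‖ ^ p - ‖x‖ ^ p - a * f y := fun y => by
        have := hsub y; linarith
      have hbig : (fun y : X => ‖x + y‖ ^ p - ‖x‖ ^ p - (a • f) y)
          =O[nhds (0:X)] fun y : X => ‖y‖ ^ p := by
        apply isBigO_of_le' (c := 2 * C ^ p)
        intro y
        have h1 := hupper y
        have h2 := hlower y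
        have hay : (a • f) y = a * f y := by simp
        rw [hay, Real.norm_eq_abs, abs_of_nonneg (h2), Real.norm_eq_abs,
          abs_of_nonneg (Real.rpow_nonneg (norm_nonneg y) p)]
        exact h1
      exact hbig.trans_isLittleO (aux_littleo hp)
    · calc ‖a • f‖ ≤ ‖a‖ * ‖f‖ := norm_smul_le a f
        _ = p * ‖x‖ ^ (p - 1) := by
            rw [hf1, mul_one, Real.norm_eq_abs, abs_of_nonneg hapos.le]
end

section
/- Let p ∈ (1,2] and let X be a (p,C_sm)-smooth Banach space. Then the Fréchet derivative φ' of the function φ(x) := ‖x‖^p satisfies the Hölder estimate ‖φ'(x) − φ'(y)‖_{X*} ≤ 2^{p+1} C_sm^p ‖x − y‖^{p−1} for all x, y ∈ X. -/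
open Real Filter Set Topology


/-- **Hölder continuity of the derivative of `‖·‖^p` on a `(p,Csm)`-smooth space.**
If `X` is `(p,Csm)`-smooth with `p ∈ (1,2]` and `φ'` is the Fréchet derivative of
`φ(x) = ‖x‖^p`, then `‖φ'(x) − φ'(y)‖ ≤ 2^{p+1} Csm^p ‖x − y‖^{p−1}`. -/
theorem holder_derivative_norm_rpow_of_smooth
    {X : Type*} [NormedAddCommGroup X] [NormedSpace ℝ X]
    (p Csm : ℝ) (hp : 1 < p) (hp2 : p ≤ 2) (hCsm : 0 < Csm)
    (hsmooth : ∀ x y : X,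
      (1/2) * (‖x + y‖ ^ p + ‖x - y‖ ^ p) ≤ ‖x‖ ^ p + Csm ^ p * ‖y‖ ^ p)
    (φ' : X → X →L[ℝ] ℝ)
    (hφ' : ∀ x : X, HasFDerivAt (fun z : X => ‖z‖ ^ p) (φ' x) x) :
    ∀ x y : X, ‖φ' x - φ' y‖ ≤ 2 ^ (p + 1) * Csm ^ p * ‖x - y‖ ^ (p - 1) := by
  intro x y
  have hpnn : (0:ℝ) ≤ p := by linarith
  have hCp : (0:ℝ) < Csm ^ p := Real.rpow_pos_of_pos hCsm p
  -- convex combination inequality for φ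
  have hmid : ∀ (a b : ℝ) (u v : X), 0 ≤ a → 0 ≤ b → a + b = 1 →
      ‖a • u + b • v‖ ^ p ≤ a * ‖u‖ ^ p + b * ‖v‖ ^ p := by
    intro a b u v ha hb hab
    have h1 : ‖a • u + b • v‖ ≤ a * ‖u‖ + b * ‖v‖ := by
      calc ‖a • u + b • v‖ ≤ ‖a • u‖ + ‖b • v‖ := norm_add_le _ _
        _ = a * ‖u‖ + b * ‖v‖ := by
            rw [norm_smul, norm_smul, Real.norm_of_nonneg ha, Real.norm_of_nonneg hb]
    have h2 : ‖a • u + b • v‖ ^ p ≤ (a * ‖u‖ + b * ‖v‖) ^ p :=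
      Real.rpow_le_rpow (norm_nonneg _) h1 hpnn
    have h3 := (convexOn_rpow hp.le).2 (Set.mem_Ici.2 (norm_nonneg u))
      (Set.mem_Ici.2 (norm_nonneg v)) ha hb hab
    simp only [smul_eq_mul] at h3
    exact h2.trans h3
  -- subgradient inequality
  have hsub : ∀ (u h : X), (φ' u) h ≤ ‖u + h‖ ^ p - ‖u‖ ^ p := by
    intro u h
    have hline : HasDerivAt (fun t : ℝ => u + t • h) h 0 := by
      simpa using ((hasDerivAt_id (0:ℝ)).smul_const h).const_add u
    have hD : HasDerivAt (fun t : ℝ => ‖u + t • h‖ ^ p) ((φ' u) h) 0 := by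
      have := (hφ' (u + (0:ℝ) • h)).comp_hasDerivAt 0 hline
      have h0 : u + (0:ℝ) • h = u := by simp
      rw [h0] at this
      exact this
    have htend : Tendsto (slope (fun t : ℝ => ‖u + t • h‖ ^ p) 0) (𝓝[>] (0:ℝ))
        (𝓝 ((φ' u) h)) :=
      (hasDerivAt_iff_tendsto_slope.1 hD).mono_left
        (nhdsWithin_mono _ fun z hz => ne_of_gt hz)
    refine le_of_tendsto htend ?_
    filter_upwards [Ioc_mem_nhdsGT_of_mem
      (show (0:ℝ) ∈ Set.Ico (0:ℝ) 1 by norm_num)] with t ht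
    have hcvx := hmid (1 - t) t u (u + h) (by linarith [ht.2]) ht.1.le (by ring)
    have hpt : (1 - t) • u + t • (u + h) = u + t • h := by module
    rw [hpt] at hcvx
    have hs : slope (fun t : ℝ => ‖u + t • h‖ ^ p) 0 t = (‖u + t • h‖ ^ p - ‖u‖ ^ p) / t := by
      simp [slope_def_field]
    rw [hs, div_le_iff₀ ht.1]
    nlinarith [hcvx]
  -- key inequality
  have key : ∀ h : X, (φ' x) h - (φ' y) h ≤
      2 * Csm ^ p * ‖(1/2 : ℝ) • (x - y) + h‖ ^ p := by
    intro h
    have h1 := hsub x h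
    have h2 := hsub y (-h)
    have hny : (φ' y) (-h) = -((φ' y) h) := map_neg _ _
    rw [hny] at h2
    set c : X := (1/2 : ℝ) • (x + y) with hc
    set w : X := (1/2 : ℝ) • (x - y) + h with hw
    have e1 : x + h = c + w := by rw [hc, hw]; module
    have e2 : y + -h = c - w := by rw [hc, hw]; module
    rw [e1] at h1
    rw [e2] at h2
    have hsm := hsmooth c w
    have hmidc : ‖c‖ ^ p ≤ (1/2) * ‖x‖ ^ p + (1/2) * ‖y‖ ^ p := by
      have := hmid (1/2) (1/2) x y (by norm_num) (by norm_num) (by norm_num)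
      have hc2 : (1/2 : ℝ) • x + (1/2 : ℝ) • y = c := by rw [hc]; module
      rwa [hc2] at this
    linarith
  -- the difference functional
  set L : X →L[ℝ] ℝ := φ' x - φ' y with hL
  have hLapp : ∀ h : X, L h = (φ' x) h - (φ' y) h := fun h => rfl
  rcases eq_or_ne (x - y) 0 with hv | hv
  · have hxy : x = y := sub_eq_zero.1 hv
    have h0 : ‖L‖ = 0 := by rw [hL, hxy]; simp
    rw [h0]
    positivity
  · have hvpos : (0:ℝ) < ‖x - y‖ := norm_pos_iff.2 hv
    -- bound on L (x - y)
    have hLv : L (x - y) ≤ 4 * Csm ^ p * ‖x - y‖ ^ p := by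
      have := key ((1/2 : ℝ) • (x - y))
      have hww : (1/2 : ℝ) • (x - y) + (1/2 : ℝ) • (x - y) = x - y := by module
      rw [hww] at this
      have hsm : (φ' x) ((1/2 : ℝ) • (x - y)) - (φ' y) ((1/2 : ℝ) • (x - y))
          = (1/2) * L (x - y) := by
        rw [hLapp]
        simp [map_smul, smul_eq_mul]
        ring
      rw [hsm] at this
      linarith
    -- bound on L u for every u
    have hbound : ∀ u : X, L u ≤ 4 * Csm ^ p * ‖x - y‖ ^ (p - 1) * ‖u‖ := by
      intro u
      rcases eq_or_ne u 0 with hu | hu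
      · simp [hu]
      · have hupos : (0:ℝ) < ‖u‖ := norm_pos_iff.2 hu
        set t : ℝ := ‖x - y‖ / ‖u‖ with ht
        have htpos : (0:ℝ) < t := div_pos hvpos hupos
        have := key (t • u - (1/2 : ℝ) • (x - y))
        have hww : (1/2 : ℝ) • (x - y) + (t • u - (1/2 : ℝ) • (x - y)) = t • u := by module
        rw [hww] at this
        have hnorm : ‖t • u‖ ^ p = ‖x - y‖ ^ p := by
          rw [norm_smul, Real.norm_of_nonneg htpos.le, ht, div_mul_cancel₀ _ (ne_of_gt hupos)]
        rw [hnorm] at this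
        have happ : (φ' x) (t • u - (1/2 : ℝ) • (x - y)) - (φ' y) (t • u - (1/2 : ℝ) • (x - y))
            = t * L u - (1/2) * L (x - y) := by
          rw [hLapp, hLapp]
          simp [map_sub, map_smul, smul_eq_mul]
          ring
        rw [happ] at this
        have h4 : t * L u ≤ 4 * Csm ^ p * ‖x - y‖ ^ p := by linarith
        have h5 : L u ≤ 4 * Csm ^ p * ‖x - y‖ ^ p / t := by
          rw [le_div_iff₀ htpos]
          linarith [h4]
        calc L u ≤ 4 * Csm ^ p * ‖x - y‖ ^ p / t := h5
          _ = 4 * Csm ^ p * ‖x - y‖ ^ (p - 1) * ‖u‖ := by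
              rw [ht, Real.rpow_sub_one (ne_of_gt hvpos)]
              field_simp
    have hM : (0:ℝ) ≤ 4 * Csm ^ p * ‖x - y‖ ^ (p - 1) := by positivity
    have hop : ‖L‖ ≤ 4 * Csm ^ p * ‖x - y‖ ^ (p - 1) := by
      refine L.opNorm_le_bound hM fun u => ?_
      rw [Real.norm_eq_abs, abs_le]
      constructor
      · have := hbound (-u)
        rw [map_neg, norm_neg] at this
        linarith
      · exact hbound u
    have h24 : (4:ℝ) ≤ 2 ^ (p + 1) := by
      have h2 : (2:ℝ) ^ (2:ℝ) ≤ 2 ^ (p + 1) :=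
        Real.rpow_le_rpow_of_exponent_le (by norm_num) (by linarith)
      have : (2:ℝ) ^ (2:ℝ) = 4 := by
        rw [show (2:ℝ) = ((2:ℕ):ℝ) by norm_num, Real.rpow_natCast]
        norm_num
      linarith
    calc ‖L‖ ≤ 4 * Csm ^ p * ‖x - y‖ ^ (p - 1) := hop
      _ ≤ 2 ^ (p + 1) * Csm ^ p * ‖x - y‖ ^ (p - 1) := by
          have hvp : (0:ℝ) ≤ ‖x - y‖ ^ (p - 1) := Real.rpow_nonneg (norm_nonneg _) _
          nlinarith [hCp]
end

section
/- Let p ∈ (1,2] and let X be a Banach space such that the p-th power of the norm has a (p−1)-Hölder derivative with constant C_H. Then X is (p, (C_H^p/p)^{1/p})-smooth; that is, for all x, y ∈ X, (1/2)(‖x+y‖^p + ‖x−y‖^p) ≤ ‖x‖^p + (C_H^p/p)‖y‖^p. -/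
private lemma taylor_bound_aux
    {X : Type*} [NormedAddCommGroup X] [NormedSpace ℝ X]
    (p CH : ℝ) (hp : 1 < p) (hCH : 0 < CH)
    (φ' : X → X →L[ℝ] ℝ)
    (hφ' : ∀ x : X, HasFDerivAt (fun z : X => ‖z‖ ^ p) (φ' x) x)
    (hHolder : ∀ x y : X, ‖φ' x - φ' y‖ ≤ CH ^ p * ‖x - y‖ ^ (p - 1))
    (x y : X) :
    ‖x + y‖ ^ p ≤ ‖x‖ ^ p + φ' x y + (CH ^ p / p) * ‖y‖ ^ p := by
  have hp0 : 0 < p := lt_trans one_pos hp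
  have hp1 : 0 < p - 1 := by linarith
  have hkey : ∀ c : ℝ, 0 ≤ c → c ^ (p-1) * c = c ^ p := by
    intro c hc
    nth_rewrite 2 [← Real.rpow_one c]
    rw [← Real.rpow_add' hc (by linarith : p - 1 + 1 ≠ 0)]
    norm_num
  set ψ : ℝ → ℝ := fun t => φ' (x + t • y) y with hψ
  -- derivative of t ↦ ‖x + t•y‖^p
  have hderiv : ∀ t : ℝ, HasDerivAt (fun t : ℝ => ‖x + t • y‖ ^ p) (ψ t) t := by
    intro t
    have h1 : HasDerivAt (fun t : ℝ => x + t • y) y t := by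
      simpa using ((hasDerivAt_id t).smul_const y).const_add x
    exact (hφ' (x + t • y)).comp_hasDerivAt t h1
  -- pointwise Hölder bound for ψ
  have hbound : ∀ t ∈ Set.Icc (0:ℝ) 1,
      ψ t - ψ 0 ≤ CH ^ p * ‖y‖ ^ p * t ^ (p - 1) := by
    intro t ht
    have h2 : ψ t - ψ 0 ≤ ‖φ' (x + t • y) - φ' (x + (0:ℝ) • y)‖ * ‖y‖ := by
      have h := (φ' (x + t • y) - φ' (x + (0:ℝ) • y)).le_opNorm y
      simp only [ContinuousLinearMap.sub_apply] at h
      calc ψ t - ψ 0 ≤ |ψ t - ψ 0| := le_abs_self _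
        _ ≤ _ := by simpa [hψ, Real.norm_eq_abs] using h
    have h3 : ‖φ' (x + t • y) - φ' (x + (0:ℝ) • y)‖ ≤ CH ^ p * (t * ‖y‖) ^ (p - 1) := by
      have h := hHolder (x + t • y) (x + (0:ℝ) • y)
      have heq : (x + t • y) - (x + (0:ℝ) • y) = t • y := by
        simp
      rw [heq] at h
      rwa [norm_smul, Real.norm_eq_abs, abs_of_nonneg ht.1] at h
    have hy : (0:ℝ) ≤ ‖y‖ := norm_nonneg y
    calc ψ t - ψ 0 ≤ ‖φ' (x + t • y) - φ' (x + (0:ℝ) • y)‖ * ‖y‖ := h2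
      _ ≤ CH ^ p * (t * ‖y‖) ^ (p - 1) * ‖y‖ :=
          mul_le_mul_of_nonneg_right h3 hy
      _ = CH ^ p * ‖y‖ ^ p * t ^ (p - 1) := by
          rw [Real.mul_rpow ht.1 hy]
          rw [show CH ^ p * (t ^ (p-1) * ‖y‖ ^ (p-1)) * ‖y‖
              = CH ^ p * (‖y‖ ^ (p-1) * ‖y‖) * t ^ (p-1) by ring, hkey _ hy]
  -- continuity of ψ
  have hcont : Continuous ψ := by
    rw [continuous_iff_continuousAt]
    intro s
    rw [ContinuousAt, tendsto_iff_dist_tendsto_zero]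
    have hg : Continuous (fun t : ℝ => CH ^ p * (|t - s| * ‖y‖) ^ (p - 1) * ‖y‖) := by
      apply Continuous.mul _ continuous_const
      apply continuous_const.mul
      apply Continuous.rpow_const
      · exact (continuous_abs.comp (continuous_id.sub continuous_const)).mul continuous_const
      · intro _; right; linarith
    have hg0 : Filter.Tendsto (fun t : ℝ => CH ^ p * (|t - s| * ‖y‖) ^ (p - 1) * ‖y‖)
        (nhds s) (nhds 0) := by
      have := hg.tendsto s
      simpa [Real.zero_rpow (ne_of_gt hp1)] using this
    apply squeeze_zero (fun t => dist_nonneg) _ hg0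
    intro t
    have h := (φ' (x + t • y) - φ' (x + s • y)).le_opNorm y
    simp only [ContinuousLinearMap.sub_apply] at h
    have h3 : ‖φ' (x + t • y) - φ' (x + s • y)‖ ≤ CH ^ p * (|t - s| * ‖y‖) ^ (p - 1) := by
      have hh := hHolder (x + t • y) (x + s • y)
      have heq : (x + t • y) - (x + s • y) = (t - s) • y := by
        rw [sub_smul]; abel
      rw [heq, norm_smul, Real.norm_eq_abs] at hh
      exact hh
    calc dist (ψ t) (ψ s) = ‖φ' (x + t • y) y - φ' (x + s • y) y‖ := by
          rw [dist_eq_norm]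
      _ ≤ ‖φ' (x + t • y) - φ' (x + s • y)‖ * ‖y‖ := h
      _ ≤ CH ^ p * (|t - s| * ‖y‖) ^ (p - 1) * ‖y‖ :=
          mul_le_mul_of_nonneg_right h3 (norm_nonneg y)
  -- FTC
  have hFTC : ∫ t in (0:ℝ)..1, ψ t = ‖x + y‖ ^ p - ‖x‖ ^ p := by
    have := intervalIntegral.integral_eq_sub_of_hasDerivAt
      (f := fun t : ℝ => ‖x + t • y‖ ^ p) (f' := ψ)
      (fun t _ => hderiv t) (hcont.intervalIntegrable 0 1)
    simpa using this
  -- the integral bound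
  have hrint : IntervalIntegrable (fun t : ℝ => CH ^ p * ‖y‖ ^ p * t ^ (p - 1))
      MeasureTheory.volume 0 1 := by
    apply Continuous.intervalIntegrable
    apply continuous_const.mul
    apply Continuous.rpow_const continuous_id
    intro _; right; linarith
  have hIbound : ∫ t in (0:ℝ)..1, (ψ t - ψ 0) ≤
      ∫ t in (0:ℝ)..1, CH ^ p * ‖y‖ ^ p * t ^ (p - 1) := by
    apply intervalIntegral.integral_mono_on zero_le_one
      ((hcont.sub continuous_const).intervalIntegrable 0 1) hrint
    intro t ht
    exact hbound t ht
  have hIval : ∫ t in (0:ℝ)..1, CH ^ p * ‖y‖ ^ p * t ^ (p - 1)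
      = CH ^ p * ‖y‖ ^ p / p := by
    rw [intervalIntegral.integral_const_mul, integral_rpow (Or.inl (by linarith))]
    rw [Real.one_rpow, Real.zero_rpow (by linarith : p - 1 + 1 ≠ 0)]
    field_simp
    ring
  have hsub : ∫ t in (0:ℝ)..1, (ψ t - ψ 0) = (‖x + y‖ ^ p - ‖x‖ ^ p) - ψ 0 := by
    rw [intervalIntegral.integral_sub (hcont.intervalIntegrable 0 1)
      (intervalIntegrable_const), hFTC]
    simp
  have hψ0 : ψ 0 = φ' x y := by simp [hψ]
  rw [hsub, hIval, hψ0] at hIbound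
  have : CH ^ p * ‖y‖ ^ p / p = CH ^ p / p * ‖y‖ ^ p := by ring
  linarith [hIbound]

/-- **Hölder derivative of `‖·‖^p` implies `p`-smoothness.**
If the derivative `φ'` of `φ(x) = ‖x‖^p` is `(p−1)`-Hölder with constant `C_H` (i.e.
`‖φ'(x) − φ'(y)‖ ≤ C_H^p ‖x−y‖^{p−1}`), then `X` is `(p, (C_H^p/p)^{1/p})`-smooth. -/
theorem smooth_of_holder_derivative
    {X : Type*} [NormedAddCommGroup X] [NormedSpace ℝ X]
    (p CH : ℝ) (hp : 1 < p) (hp2 : p ≤ 2) (hCH : 0 < CH)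
    (φ' : X → X →L[ℝ] ℝ)
    (hφ' : ∀ x : X, HasFDerivAt (fun z : X => ‖z‖ ^ p) (φ' x) x)
    (hHolder : ∀ x y : X, ‖φ' x - φ' y‖ ≤ CH ^ p * ‖x - y‖ ^ (p - 1)) :
    ∀ x y : X,
      (1/2) * (‖x + y‖ ^ p + ‖x - y‖ ^ p) ≤ ‖x‖ ^ p + (CH ^ p / p) * ‖y‖ ^ p := by
  intro x y
  have h1 := taylor_bound_aux p CH hp hCH φ' hφ' hHolder x y
  have h2 := taylor_bound_aux p CH hp hCH φ' hφ' hHolder x (-y)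
  rw [← sub_eq_add_neg, norm_neg, map_neg] at h2
  linarith
end
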